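/- Let P be a phylogenetic collection of partitions of N, and define the graph G_P with vertex set N ∪ P, where p, q ∈ P are adjacent iff there is a set A with A ∈ p and N\A ∈ q, a vertex p ∈ P is adjacent to i ∈ N iff {i} ∈ p, and no two vertices of N are adjacent. Then G_P is connected. -/

import Mathlib

open Set

/-- A phylogenetic collection of partitions of (the finite set) `α`:
(P1) every partition has at least 3 parts; (P2) every singleton is a part of some
partition; (P3) every subset is a part of at most one partition; (P4) the complement of
every part of cardinality at least 2 is also a part of some partition. -/
def IsPhyloP {α : Type*} (P : Set (Set (Set α))) : Prop :=
  (∀ p ∈ P, Setoid.IsPartition p ∧ 3 ≤ p.ncard) ∧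
  (∀ i : α, ∃ p ∈ P, ({i} : Set α) ∈ p) ∧
  (∀ A : Set α, ∀ p ∈ P, ∀ q ∈ P, A ∈ p → A ∈ q → p = q) ∧
  (∀ p ∈ P, ∀ A ∈ p, 2 ≤ A.ncard → ∃ q ∈ P, Aᶜ ∈ q)

/-- The adjacency relation of the graph `G_P` on the vertex set `N ∪ P`:
two partitions `p, q` are adjacent iff there is a set `A` with `A ∈ p` and `N \ A ∈ q`;
a partition `p` and an element `i` are adjacent iff `{i} ∈ p`; no two elements of `N`
are adjacent. -/
def GPAdj {α : Type*} (P : Set (Set (Set α))) : α ⊕ ↥P → α ⊕ ↥P → Prop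
  | Sum.inl _, Sum.inl _ => False
  | Sum.inl i, Sum.inr p => ({i} : Set α) ∈ p.1
  | Sum.inr p, Sum.inl i => ({i} : Set α) ∈ p.1
  | Sum.inr p, Sum.inr q => p ≠ q ∧ ∃ A : Set α, A ∈ p.1 ∧ Aᶜ ∈ q.1

/-- The graph `G_P` with vertex set `N ∪ P`. -/
def GP {α : Type*} (P : Set (Set (Set α))) : SimpleGraph (α ⊕ ↥P) where
  Adj := GPAdj P
  symm := by
    constructor
    rintro (i | p) (j | q) h
    · exact h.elim
    · exact h
    · exact h
    · obtain ⟨hne, A, hA, hAc⟩ := h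
      exact ⟨hne.symm, Aᶜ, hAc, by rwa [compl_compl]⟩
  loopless := by
    constructor
    rintro (i | p) h
    · exact h
    · exact h.1 rfl

/-- A partition with at least 3 parts cannot contain both a set and its complement. -/
lemma no_compl_pair {α : Type*} {p : Set (Set α)} (hpart : Setoid.IsPartition p)
    (h3 : 3 ≤ p.ncard) {A : Set α} (hA : A ∈ p) (hAc : Aᶜ ∈ p) : False := by
  have hsub : ¬ (p ⊆ {A, Aᶜ}) := by
    intro hsub
    have := Set.ncard_le_ncard hsub (Set.toFinite _)
    have h2 : Set.ncard ({A, Aᶜ} : Set (Set α)) ≤ 2 := Set.ncard_insert_le _ _ |>.trans (by simp)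
    omega
  obtain ⟨C, hCp, hC⟩ := Set.not_subset.mp hsub
  have hCne : C ≠ ∅ := fun h => hpart.1 (h ▸ hCp)
  obtain ⟨x, hx⟩ := Set.nonempty_iff_ne_empty.mpr hCne
  obtain ⟨B, ⟨hBp, hxB⟩, huniq⟩ := hpart.2 x
  rcases (em (x ∈ A)) with hxA | hxA
  · have h1 : C = B := huniq C ⟨hCp, hx⟩
    have h2 : A = B := huniq A ⟨hA, hxA⟩
    exact hC (by simp [h1.trans h2.symm])
  · have h1 : C = B := huniq C ⟨hCp, hx⟩
    have h2 : Aᶜ = B := huniq Aᶜ ⟨hAc, hxA⟩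
    exact hC (by simp [h1.trans h2.symm])

lemma reach_aux {α : Type*} [Fintype α] (P : Set (Set (Set α))) (hP : IsPhyloP P) :
    ∀ n : ℕ, ∀ p : ↥P, ∀ i : α, ∀ A : Set α, A ∈ p.1 → i ∈ A → A.ncard ≤ n →
      (GP P).Reachable (Sum.inr p) (Sum.inl i) := by
  intro n
  induction n with
  | zero =>
    intro p i A hA hiA hle
    exfalso
    have : A.ncard = 0 := Nat.le_zero.mp hle
    have := Set.ncard_pos (Set.toFinite A) |>.mpr ⟨i, hiA⟩
    omega
  | succ n ih =>
    intro p i A hA hiA hle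
    rcases le_or_gt A.ncard 1 with h1 | h2
    · -- A = {i}
      have hApos : 0 < A.ncard := Set.ncard_pos (Set.toFinite A) |>.mpr ⟨i, hiA⟩
      have : A.ncard = 1 := by omega
      obtain ⟨a, ha⟩ := Set.ncard_eq_one.mp this
      have : a = i := by rw [ha] at hiA; exact hiA.symm
      have hAdj : (GP P).Adj (Sum.inr p) (Sum.inl i) := by
        show ({i} : Set α) ∈ p.1
        rwa [← this, ← ha]
      exact hAdj.reachable
    · obtain ⟨q, hqP, hAcq⟩ := hP.2.2.2 p.1 p.2 A hA h2
      have hpq : p.1 ≠ q := by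
        intro h
        exact no_compl_pair (hP.1 p.1 p.2).1 (hP.1 p.1 p.2).2 hA (h ▸ hAcq)
      -- part B of q containing i
      obtain ⟨B, ⟨hBq, hiB⟩, huniq⟩ := (hP.1 q hqP).1.2 i
      have hBA : B ⊆ A := by
        intro x hxB
        by_contra hxA
        have h1 : B = Aᶜ := by
          obtain ⟨B', ⟨hB'q, hxB'⟩, huniq'⟩ := (hP.1 q hqP).1.2 x
          have h2 : Aᶜ = B' := huniq' Aᶜ ⟨hAcq, hxA⟩
          have h3 : B = B' := huniq' B ⟨hBq, hxB⟩
          rw [h3, ← h2]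
        exact (h1 ▸ hiB : i ∈ Aᶜ) hiA
      have hBneA : B ≠ A := by
        intro h
        exact hpq (hP.2.2.1 A p.1 p.2 q hqP hA (h ▸ hBq))
      have hlt : B.ncard < A.ncard :=
        Set.ncard_lt_ncard (ssubset_of_subset_of_ne hBA hBneA) (Set.toFinite A)
      have hadj : (GP P).Adj (Sum.inr p) (Sum.inr ⟨q, hqP⟩) := by
        refine ⟨?_, A, hA, hAcq⟩
        intro h
        exact hpq (congrArg Subtype.val h)
      exact hadj.reachable.trans (ih ⟨q, hqP⟩ i B hBq hiB (by omega))

/-- for a phylogenetic collection of partitions `P`, the graph `G_P` is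
connected. -/
theorem stmt6 {α : Type*} [Fintype α] (hcard : 3 ≤ Fintype.card α)
    (P : Set (Set (Set α))) (hP : IsPhyloP P) : (GP P).Connected := by
  have hne : Nonempty α := by
    have : 0 < Fintype.card α := by omega
    exact Fintype.card_pos_iff.mp this
  obtain ⟨i₀⟩ := hne
  have key : ∀ v : α ⊕ ↥P, (GP P).Reachable v (Sum.inl i₀) := by
    have elem : ∀ i : α, (GP P).Reachable (Sum.inl i) (Sum.inl i₀) := by
      intro i
      obtain ⟨p, hpP, hip⟩ := hP.2.1 i
      have h1 : (GP P).Adj (Sum.inl i) (Sum.inr ⟨p, hpP⟩) := hip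
      obtain ⟨B, ⟨hBp, hi0B⟩, _⟩ := (hP.1 p hpP).1.2 i₀
      exact h1.reachable.trans (reach_aux P hP B.ncard ⟨p, hpP⟩ i₀ B hBp hi0B le_rfl)
    rintro (i | p)
    · exact elem i
    · obtain ⟨B, ⟨hBp, hi0B⟩, _⟩ := (hP.1 p.1 p.2).1.2 i₀
      exact reach_aux P hP B.ncard p i₀ B hBp hi0B le_rfl
  have : Nonempty (α ⊕ ↥P) := ⟨Sum.inl i₀⟩
  exact ⟨fun u v => (key u).trans (key v).symm⟩
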